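/- Fix an integer r ≥ 1. There exists a constant c_r > 0 depending only on r such that the following holds for every positive integer n. Let a = (a_1, ..., a_n) be a vector of integers and suppose there exist integers q_1, ..., q_r and nonnegative integers M_1, ..., M_r such that every coordinate can be written as a_i = x_{i,1} q_1 + ... + x_{i,r} q_r with integers x_{i,j} satisfying |x_{i,j}| ≤ M_j for all i in [n] and j in [r]. Then ρ(a) ≥ c_r / (n^{r/2} · (2M_1+1)·(2M_2+1)···(2M_r+1)). -/

import Mathlib

open scoped BigOperators

/-- The concentration probability `ρ(a)` of an integer vector `a`: the supremum over `x ∈ ℤ` of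
the probability that the Rademacher sum `ε₁a₁ + ⋯ + εₙaₙ` equals `x`. -/
noncomputable def rhoInt (n : ℕ) (a : Fin n → ℤ) : ℝ :=
  ⨆ x : ℤ,
    (Set.ncard {ε : Fin n → Bool | (∑ i, if ε i then a i else -a i) = x} : ℝ) / 2 ^ n

namespace GapAux

variable {n : ℕ}

/-- The sign `±1` associated to a Boolean. -/
def sgn (ε : Fin n → Bool) (i : Fin n) : ℤ := if ε i then 1 else -1

lemma sgn_update_self (ε : Fin n → Bool) (i : Fin n) :
    sgn (Function.update ε i (!ε i)) i = - sgn ε i := by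
  simp only [sgn, Function.update_self]
  cases h : ε i <;> simp

lemma sgn_update_other (ε : Fin n → Bool) {i k : Fin n} (hk : k ≠ i) :
    sgn (Function.update ε i (!ε i)) k = sgn ε k := by
  simp only [sgn, Function.update_of_ne hk]

lemma orth {i k : Fin n} (hik : i ≠ k) :
    ∑ ε : Fin n → Bool, sgn ε i * sgn ε k = 0 := by
  classical
  refine Finset.sum_involution (fun ε _ => Function.update ε i (!ε i)) (fun ε _ => ?_)
    (fun ε _ _ => ?_) (fun ε _ => Finset.mem_univ _) (fun ε _ => ?_)
  · rw [sgn_update_self, sgn_update_other ε (Ne.symm hik)]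
    ring
  · intro hEq
    have h := congrFun hEq i
    simp at h
  · funext m
    by_cases hm : m = i
    · subst hm
      simp [Function.update_self, Function.update_idem]
    · simp [Function.update_of_ne hm]

lemma diag (i : Fin n) :
    ∑ ε : Fin n → Bool, sgn ε i * sgn ε i = 2 ^ n := by
  have h : ∀ ε : Fin n → Bool, sgn ε i * sgn ε i = 1 := by
    intro ε; unfold sgn; cases h : ε i <;> simp
  simp only [h, Finset.sum_const, Finset.card_univ, nsmul_eq_mul, mul_one]
  simp

/-- Parseval-type identity: the sum over all sign vectors of the square of the signed sum. -/
lemma sum_sq (y : Fin n → ℤ) :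
    ∑ ε : Fin n → Bool, (∑ i, sgn ε i * y i) ^ 2 = 2 ^ n * ∑ i, y i ^ 2 := by
  classical
  have expand : ∀ ε : Fin n → Bool,
      (∑ i, sgn ε i * y i) ^ 2 = ∑ i, ∑ k, sgn ε i * sgn ε k * (y i * y k) := by
    intro ε
    rw [sq, Finset.sum_mul_sum]
    exact Finset.sum_congr rfl fun i _ => Finset.sum_congr rfl fun k _ => by ring
  simp only [expand]
  rw [Finset.sum_comm]
  have swap : ∀ i : Fin n,
      ∑ ε : Fin n → Bool, ∑ k, sgn ε i * sgn ε k * (y i * y k)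
        = ∑ k, (∑ ε : Fin n → Bool, sgn ε i * sgn ε k) * (y i * y k) := by
    intro i
    rw [Finset.sum_comm]
    exact Finset.sum_congr rfl fun k _ => by rw [Finset.sum_mul]
  simp only [swap]
  have single : ∀ i : Fin n,
      ∑ k, (∑ ε : Fin n → Bool, sgn ε i * sgn ε k) * (y i * y k)
        = 2 ^ n * y i ^ 2 := by
    intro i
    rw [Finset.sum_eq_single i]
    · rw [diag]; ring
    · intro k _ hk
      rw [orth (Ne.symm hk), zero_mul]
    · intro h; exact absurd (Finset.mem_univ i) h
  simp only [single]
  rw [← Finset.mul_sum]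

end GapAux

/-- Fix an integer `r ≥ 1`. There is a constant `c_r > 0`, depending only on `r`, such that for
every positive integer `n` and every integer vector `a = (a₁, …, aₙ)`: if there are integers
`q₁, …, q_r`, nonnegative integers `M₁, …, M_r`, and integers `x_{i,j}` with `|x_{i,j}| ≤ M_j`
and `a_i = x_{i,1}q₁ + ⋯ + x_{i,r}q_r` for all `i, j`, then
`ρ(a) ≥ c_r / (n^{r/2}·(2M₁+1)⋯(2M_r+1))`. -/
theorem gap_lower_bound :
    ∀ r : ℕ, 1 ≤ r → ∃ c : ℝ, 0 < c ∧
      ∀ n : ℕ, 0 < n →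
        ∀ (a : Fin n → ℤ) (q : Fin r → ℤ) (M : Fin r → ℕ) (x : Fin n → Fin r → ℤ),
          (∀ i j, |x i j| ≤ (M j : ℤ)) →
          (∀ i, a i = ∑ j, x i j * q j) →
          c / ((n : ℝ) ^ ((r : ℝ) / 2) * ∏ j, (2 * (M j : ℝ) + 1)) ≤ rhoInt n a := by
  classical
  intro r hr
  set K : ℝ := (Real.sqrt (2 * r) + 1) ^ r with hKdef
  have hKpos : 0 < K := pow_pos (by positivity) r
  refine ⟨1 / (2 * K), by positivity, ?_⟩
  intro n hn a q M x hx ha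
  -- the signed column sums
  set S : (Fin n → Bool) → Fin r → ℤ := fun ε j => ∑ i, GapAux.sgn ε i * x i j with hSdef
  set T : ℕ := Nat.sqrt (2 * r * n) + 1 with hTdef
  -- the value of the Rademacher sum
  have hval : ∀ ε : Fin n → Bool,
      (∑ i, if ε i then a i else -a i) = ∑ j, S ε j * q j := by
    intro ε
    have h1 : (∑ i, if ε i then a i else -a i) = ∑ i, GapAux.sgn ε i * a i :=
      Finset.sum_congr rfl fun i _ => by unfold GapAux.sgn; cases h : ε i <;> simp
    rw [h1]
    calc ∑ i, GapAux.sgn ε i * a i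
        = ∑ i, ∑ j, GapAux.sgn ε i * (x i j * q j) := by
          refine Finset.sum_congr rfl fun i _ => ?_
          rw [ha i, Finset.mul_sum]
      _ = ∑ j, ∑ i, GapAux.sgn ε i * (x i j * q j) := Finset.sum_comm
      _ = ∑ j, S ε j * q j := by
          refine Finset.sum_congr rfl fun j _ => ?_
          simp only [hSdef, Finset.sum_mul]
          exact Finset.sum_congr rfl fun i _ => by ring
  -- the bad sets and Chebyshev bound
  set bad : Fin r → Finset (Fin n → Bool) :=
    fun j => Finset.univ.filter fun ε => 2 * r * n * (M j : ℤ) ^ 2 < (S ε j) ^ 2 with hbaddef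
  have hcheb : ∀ j, 2 * r * (bad j).card ≤ 2 ^ n := by
    intro j
    rcases Nat.eq_zero_or_pos (M j) with hM | hM
    · have : bad j = ∅ := by
        apply Finset.filter_false_of_mem
        intro ε _
        have hx0 : ∀ i, x i j = 0 := by
          intro i
          have := hx i j
          rw [hM] at this
          simpa using abs_nonpos_iff.mp (by exact_mod_cast this)
        have : S ε j = 0 := by
          simp only [hSdef]
          exact Finset.sum_eq_zero fun i _ => by rw [hx0 i, mul_zero]
        rw [this, hM]
        norm_num
      simp [this]
    · -- M j ≥ 1
      have hsum : ∑ ε : Fin n → Bool, (S ε j) ^ 2 ≤ 2 ^ n * (n * (M j : ℤ) ^ 2) := by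
        rw [hSdef]
        calc ∑ ε : Fin n → Bool, (∑ i, GapAux.sgn ε i * x i j) ^ 2
            = 2 ^ n * ∑ i, (x i j) ^ 2 := GapAux.sum_sq _
          _ ≤ 2 ^ n * (n * (M j : ℤ) ^ 2) := by
              have : ∑ i, (x i j) ^ 2 ≤ ∑ _i : Fin n, (M j : ℤ) ^ 2 :=
                Finset.sum_le_sum fun i _ => sq_le_sq' (abs_le.mp (hx i j)).1 (abs_le.mp (hx i j)).2
              simp only [Finset.sum_const, Finset.card_univ, Fintype.card_fin,
                nsmul_eq_mul] at this
              exact mul_le_mul_of_nonneg_left this (by positivity)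
      have hlow : ((bad j).card : ℤ) * (2 * r * n * (M j : ℤ) ^ 2 + 1)
          ≤ ∑ ε : Fin n → Bool, (S ε j) ^ 2 := by
        calc ((bad j).card : ℤ) * (2 * r * n * (M j : ℤ) ^ 2 + 1)
            ≤ ∑ ε ∈ bad j, (S ε j) ^ 2 := by
              rw [← nsmul_eq_mul]
              apply Finset.card_nsmul_le_sum
              intro ε hε
              have := (Finset.mem_filter.mp hε).2
              omega
          _ ≤ ∑ ε : Fin n → Bool, (S ε j) ^ 2 := by
              apply Finset.sum_le_sum_of_subset_of_nonneg (Finset.subset_univ _)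
              intro ε _ _; positivity
      have key : (2 * r * (bad j).card : ℤ) * (n * (M j : ℤ) ^ 2)
          ≤ (2 ^ n : ℤ) * (n * (M j : ℤ) ^ 2) := by
        calc (2 * r * (bad j).card : ℤ) * (n * (M j : ℤ) ^ 2)
            ≤ ((bad j).card : ℤ) * (2 * r * n * (M j : ℤ) ^ 2 + 1) := by
              have : (0 : ℤ) ≤ (bad j).card := Int.natCast_nonneg _
              nlinarith
          _ ≤ 2 ^ n * (n * (M j : ℤ) ^ 2) := hlow.trans hsum
      have hpos : (0 : ℤ) < n * (M j : ℤ) ^ 2 := by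
        have : (0:ℤ) < (n:ℤ) := by exact_mod_cast hn
        have : (0:ℤ) < (M j : ℤ) ^ 2 := by positivity
        positivity
      have := le_of_mul_le_mul_right key hpos
      exact_mod_cast this
  -- the good set
  set good : Finset (Fin n → Bool) :=
    Finset.univ.filter fun ε => ∀ j, (S ε j) ^ 2 ≤ 2 * r * n * (M j : ℤ) ^ 2 with hgooddef
  have hgood : 2 ^ (n - 1) ≤ good.card := by
    set badAll : Finset (Fin n → Bool) :=
      Finset.univ.filter fun ε => ¬ ∀ j, (S ε j) ^ 2 ≤ 2 * r * n * (M j : ℤ) ^ 2 with hbadAlldef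
    have hsplit : good.card + badAll.card = 2 ^ n := by
      rw [hgooddef, hbadAlldef, Finset.card_filter_add_card_filter_not]
      simp [Finset.card_univ]
    have hsub : badAll ⊆ Finset.univ.biUnion bad := by
      intro ε hε
      have := (Finset.mem_filter.mp hε).2
      push_neg at this
      obtain ⟨j, hj⟩ := this
      exact Finset.mem_biUnion.mpr ⟨j, Finset.mem_univ _,
        Finset.mem_filter.mpr ⟨Finset.mem_univ _, hj⟩⟩
    have hba : badAll.card ≤ ∑ j, (bad j).card :=
      le_trans (Finset.card_le_card hsub) (Finset.card_biUnion_le)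
    have hsum2 : 2 * r * ∑ j, (bad j).card ≤ r * 2 ^ n := by
      calc 2 * r * ∑ j, (bad j).card = ∑ j, 2 * r * (bad j).card := by
            rw [Finset.mul_sum]
        _ ≤ ∑ _j : Fin r, 2 ^ n := Finset.sum_le_sum fun j _ => hcheb j
        _ = r * 2 ^ n := by simp [Finset.sum_const, mul_comm]
    have h2 : 2 * badAll.card ≤ 2 ^ n := by
      have : r * (2 * badAll.card) ≤ r * 2 ^ n := by
        calc r * (2 * badAll.card) ≤ r * (2 * ∑ j, (bad j).card) := by
              exact Nat.mul_le_mul_left _ (Nat.mul_le_mul_left _ hba)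
          _ = 2 * r * ∑ j, (bad j).card := by ring
          _ ≤ r * 2 ^ n := hsum2
      exact Nat.le_of_mul_le_mul_left this (by omega)
    have hpow : 2 ^ n = 2 * 2 ^ (n - 1) := by
      conv_lhs => rw [show n = (n - 1) + 1 by omega]
      ring
    omega
  -- the box
  set box : Finset (Fin r → ℤ) :=
    Fintype.piFinset fun j => Finset.Icc (-(T * M j : ℤ)) (T * M j) with hboxdef
  set B : ℕ := ∏ j, (2 * T * M j + 1) with hBdef
  have hboxcard : box.card = B := by
    rw [hboxdef, Fintype.card_piFinset, hBdef]
    refine Finset.prod_congr rfl fun j _ => ?_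
    rw [Int.card_Icc]
    have h1 : ((T:ℤ) * (M j:ℤ)) = ((T * M j : ℕ) : ℤ) := by push_cast; ring
    rw [h1]
    have h2 : 2 * T * M j + 1 = 2 * (T * M j) + 1 := by ring
    rw [h2]
    omega
  have hBpos : 0 < B := by
    rw [hBdef]
    exact Finset.prod_pos fun j _ => by omega
  have hmaps : ∀ ε ∈ good, S ε ∈ box := by
    intro ε hε
    rw [hboxdef, Fintype.mem_piFinset]
    intro j
    have h1 : (S ε j) ^ 2 ≤ 2 * r * n * (M j : ℤ) ^ 2 := (Finset.mem_filter.mp hε).2 j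
    have h2 : (2 * r * n : ℤ) < (T : ℤ) * (T : ℤ) := by
      have := Nat.lt_succ_sqrt (2 * r * n)
      rw [hTdef]
      push_cast
      exact_mod_cast this
    have h3 : (S ε j) ^ 2 ≤ ((T : ℤ) * (M j : ℤ)) ^ 2 := by nlinarith [sq_nonneg (M j : ℤ)]
    have h4 := abs_le_of_sq_le_sq h3 (by positivity)
    rw [Finset.mem_Icc]
    constructor
    · linarith [(abs_le.mp h4).1]
    · exact (abs_le.mp h4).2
  -- pigeonhole
  have hfiber : ∑ w ∈ box, (good.filter fun ε => S ε = w).card = good.card :=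
    (Finset.card_eq_sum_card_fiberwise hmaps).symm
  have hboxne : box.Nonempty := Finset.card_pos.mp (by rw [hboxcard]; exact hBpos)
  have hpigeon : ∃ w ∈ box, good.card ≤ B * (good.filter fun ε => S ε = w).card := by
    apply Finset.exists_le_of_sum_le hboxne
    rw [← Finset.mul_sum, hfiber, Finset.sum_const, ← hboxcard, smul_eq_mul]
  obtain ⟨w, _, hw⟩ := hpigeon
  set v : ℤ := ∑ j, w j * q j with hvdef
  set fiber : Finset (Fin n → Bool) := good.filter fun ε => S ε = w with hfiberdef
  -- the fiber maps into the level set of v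
  have hsubset : fiber ⊆ Finset.univ.filter
      fun ε : Fin n → Bool => (∑ i, if ε i then a i else -a i) = v := by
    intro ε hε
    rw [hfiberdef, Finset.mem_filter] at hε
    refine Finset.mem_filter.mpr ⟨Finset.mem_univ _, ?_⟩
    rw [hval, hε.2, hvdef]
  -- identify the ncard
  have hncard : {ε : Fin n → Bool | (∑ i, if ε i then a i else -a i) = v}.ncard
      = (Finset.univ.filter
        fun ε : Fin n → Bool => (∑ i, if ε i then a i else -a i) = v).card := by
    rw [← Set.ncard_coe_finset]
    congr 1
    ext ε
    simp
  -- bound rhoInt from below by the term at v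
  have hterm : ((fiber.card : ℝ)) / 2 ^ n ≤ rhoInt n a := by
    have hb : BddAbove (Set.range fun z : ℤ =>
        (Set.ncard {ε : Fin n → Bool | (∑ i, if ε i then a i else -a i) = z} : ℝ) / 2 ^ n) := by
      refine ⟨1, ?_⟩
      rintro _ ⟨z, rfl⟩
      have hle : {ε : Fin n → Bool | (∑ i, if ε i then a i else -a i) = z}.ncard ≤ 2 ^ n := by
        have := Set.ncard_le_ncard
          (Set.subset_univ {ε : Fin n → Bool | (∑ i, if ε i then a i else -a i) = z})
          Set.finite_univ
        rwa [Set.ncard_univ, Nat.card_eq_fintype_card, Fintype.card_fun, Fintype.card_bool,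
          Fintype.card_fin] at this
      rw [div_le_one (by positivity)]
      exact_mod_cast hle
    have := le_ciSup hb v
    refine le_trans ?_ this
    apply div_le_div_of_nonneg_right _ (by positivity)
    · rw [hncard]
      exact_mod_cast Finset.card_le_card hsubset
  -- real-number estimates
  set N : ℝ := (n : ℝ) ^ ((r : ℝ) / 2) with hNdef
  set P : ℝ := ∏ j, (2 * (M j : ℝ) + 1) with hPdef
  have hPpos : 0 < P := Finset.prod_pos fun j _ => by positivity
  have hNpos : 0 < N := Real.rpow_pos_of_pos (by exact_mod_cast hn) _
  have hNsqrt : N = (Real.sqrt n) ^ r := by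
    rw [hNdef, Real.sqrt_eq_rpow, ← Real.rpow_natCast ((n:ℝ) ^ ((1:ℝ)/2)) r,
      ← Real.rpow_mul (by positivity)]
    congr 1
    ring
  have hsqrtn1 : (1 : ℝ) ≤ Real.sqrt n := by
    rw [show (1:ℝ) = Real.sqrt 1 by simp]
    exact Real.sqrt_le_sqrt (by exact_mod_cast hn)
  have hT1 : (1 : ℝ) ≤ (T : ℝ) := by
    have h : 1 ≤ T := by rw [hTdef]; exact Nat.succ_le_succ (Nat.zero_le _)
    exact_mod_cast h
  have hTle : (T : ℝ) ≤ (Real.sqrt (2 * r) + 1) * Real.sqrt n := by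
    have h1 : ((Nat.sqrt (2 * r * n) : ℝ)) ≤ Real.sqrt ((2 * r * n : ℕ) : ℝ) :=
      Real.nat_sqrt_le_real_sqrt
    have h2 : Real.sqrt ((2 * r * n : ℕ) : ℝ) = Real.sqrt (2 * r) * Real.sqrt n := by
      rw [← Real.sqrt_mul (by positivity)]
      congr 1
      push_cast
      ring
    rw [hTdef]
    push_cast
    calc (Nat.sqrt (2 * r * n) : ℝ) + 1
        ≤ Real.sqrt (2 * r) * Real.sqrt n + 1 := by rw [← h2]; linarith
      _ ≤ Real.sqrt (2 * r) * Real.sqrt n + Real.sqrt n := by linarith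
      _ = (Real.sqrt (2 * r) + 1) * Real.sqrt n := by ring
  have hBle : (B : ℝ) ≤ K * (N * P) := by
    have h1 : (B : ℝ) = ∏ j, (2 * (T : ℝ) * (M j : ℝ) + 1) := by
      rw [hBdef]
      push_cast
      rfl
    have h2 : (B : ℝ) ≤ ∏ j, (T : ℝ) * (2 * (M j : ℝ) + 1) := by
      rw [h1]
      apply Finset.prod_le_prod
      · intro j _; positivity
      · intro j _
        have hM0 : (0:ℝ) ≤ (M j : ℝ) := Nat.cast_nonneg _
        nlinarith [hT1]
    have h3 : ∏ j, (T : ℝ) * (2 * (M j : ℝ) + 1) = (T : ℝ) ^ r * P := by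
      rw [Finset.prod_mul_distrib, Finset.prod_const, Finset.card_univ, Fintype.card_fin, hPdef]
    have h4 : (T : ℝ) ^ r ≤ K * N := by
      rw [hKdef, hNsqrt, ← mul_pow]
      exact pow_le_pow_left₀ (by positivity) hTle r
    calc (B : ℝ) ≤ (T : ℝ) ^ r * P := by rw [← h3]; exact h2
      _ ≤ K * N * P := mul_le_mul_of_nonneg_right h4 hPpos.le
      _ = K * (N * P) := by ring
  -- final chain
  have hfinal : 1 / (2 * K) / (N * P) ≤ (fiber.card : ℝ) / 2 ^ n := by
    have e1 : 1 / (2 * K) / (N * P) = 1 / (2 * (K * (N * P))) := by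
      field_simp
    rw [e1]
    have step1 : 1 / (2 * (K * (N * P))) ≤ 1 / (2 * (B : ℝ)) := by
      apply one_div_le_one_div_of_le
      · have : (0:ℝ) < (B:ℝ) := by exact_mod_cast hBpos
        linarith
      · linarith [hBle]
    refine step1.trans ?_
    rw [div_le_div_iff₀ (by positivity) (by positivity), one_mul]
    have hg : (2:ℝ) ^ (n-1) ≤ (good.card : ℝ) := by exact_mod_cast hgood
    have hw' : (good.card : ℝ) ≤ (B : ℝ) * (fiber.card : ℝ) := by
      exact_mod_cast hw
    have hpow : (2:ℝ) ^ n = 2 * 2 ^ (n-1) := by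
      rw [show (2:ℝ) ^ n = 2 ^ (n-1+1) from by rw [Nat.sub_add_cancel hn], pow_succ]
      ring
    calc (2:ℝ) ^ n = 2 * 2 ^ (n-1) := hpow
      _ ≤ 2 * (good.card : ℝ) := by linarith
      _ ≤ 2 * ((B:ℝ) * (fiber.card : ℝ)) := by linarith
      _ = (fiber.card : ℝ) * (2 * (B:ℝ)) := by ring
  exact hfinal.trans hterm
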